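/- Fix η > 0, a probability distribution π_0 with full support on a finite set A, and functions f, f*: A → [0,1]. For a distribution π on A with support contained in that of π_0 define V(π, f*) = Σ_a π(a)·f*(a) - η^{-1}·KL(π || π_0), and let π_f(a) ∝ π_0(a)·exp(η·f(a)). Then there exists γ ∈ [0,1] such that, with f' = γ·f + (1-γ)·f*, V(π_{f*}, f*) - V(π_f, f*) ≤ η · Σ_a π_{f'}(a)·(f(a) - f*(a))². -/

import Mathlib

open Finset Real

/-- KL divergence between two distributions on a finite set. -/
noncomputable def KLdiv {A : Type*} [Fintype A] (p q : A → ℝ) : ℝ :=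
  ∑ a, p a * Real.log (p a / q a)

/-- KL-regularized value of a policy `π` under reward `g`. -/
noncomputable def klValue {A : Type*} [Fintype A] (η : ℝ) (π0 pol g : A → ℝ) : ℝ :=
  (∑ a, pol a * g a) - η⁻¹ * KLdiv pol π0

/-- Gibbs tilt of `π0` by `exp (η f)`. -/
noncomputable def gibbs {A : Type*} [Fintype A] (η : ℝ) (π0 f : A → ℝ) (a : A) : ℝ :=
  π0 a * Real.exp (η * f a) / ∑ a', π0 a' * Real.exp (η * f a')

section Aux

variable {A : Type*} [Fintype A] [Nonempty A]

lemma partition_pos (π0 : A → ℝ) (hpos : ∀ a, 0 < π0 a) (η : ℝ) (g : A → ℝ) :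
    0 < ∑ a, π0 a * Real.exp (η * g a) :=
  Finset.sum_pos (fun a _ => mul_pos (hpos a) (Real.exp_pos _)) Finset.univ_nonempty

lemma klValue_gibbs_eq (π0 : A → ℝ) (hpos : ∀ a, 0 < π0 a) (η : ℝ) (hη : 0 < η)
    (g fstar : A → ℝ) :
    klValue η π0 (gibbs η π0 g) fstar =
      (∑ a, gibbs η π0 g a * (fstar a - g a))
        + η⁻¹ * Real.log (∑ a, π0 a * Real.exp (η * g a)) := by
  have hN : 0 < ∑ a, π0 a * Real.exp (η * g a) := partition_pos π0 hpos η g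
  set N := ∑ a, π0 a * Real.exp (η * g a) with hNdef
  have hsum1 : ∑ a, gibbs η π0 g a = 1 := by
    unfold gibbs
    rw [← Finset.sum_div, ← hNdef, div_self hN.ne']
  have hlog : ∀ a, Real.log (gibbs η π0 g a / π0 a) = η * g a - Real.log N := by
    intro a
    have h1 : gibbs η π0 g a / π0 a = Real.exp (η * g a) / N := by
      unfold gibbs
      rw [← hNdef]
      field_simp [(hpos a).ne', hN.ne']
    rw [h1, Real.log_div (Real.exp_ne_zero _) hN.ne', Real.log_exp]
  have hKL : KLdiv (gibbs η π0 g) π0 =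
      η * (∑ a, gibbs η π0 g a * g a) - Real.log N := by
    unfold KLdiv
    calc ∑ a, gibbs η π0 g a * Real.log (gibbs η π0 g a / π0 a)
        = ∑ a, (η * (gibbs η π0 g a * g a) - Real.log N * gibbs η π0 g a) := by
          refine Finset.sum_congr rfl fun a _ => ?_
          rw [hlog a]; ring
      _ = η * (∑ a, gibbs η π0 g a * g a) - Real.log N * ∑ a, gibbs η π0 g a := by
          rw [Finset.sum_sub_distrib, ← Finset.mul_sum, ← Finset.mul_sum]
      _ = η * (∑ a, gibbs η π0 g a * g a) - Real.log N := by rw [hsum1, mul_one]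
  unfold klValue
  rw [hKL]
  have hηinv : η⁻¹ * η = 1 := inv_mul_cancel₀ hη.ne'
  have : ∑ a, gibbs η π0 g a * (fstar a - g a)
      = (∑ a, gibbs η π0 g a * fstar a) - ∑ a, gibbs η π0 g a * g a := by
    rw [← Finset.sum_sub_distrib]
    exact Finset.sum_congr rfl fun a _ => by ring
  rw [this]
  field_simp
  ring

end Aux

theorem stmt_4 {A : Type*} [Fintype A] [Nonempty A]
    (π0 : A → ℝ) (hpos : ∀ a, 0 < π0 a) (hsum : ∑ a, π0 a = 1)
    (η : ℝ) (hη : 0 < η) (f fstar : A → ℝ)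
    (hf : ∀ a, f a ∈ Set.Icc (0:ℝ) 1) (hfstar : ∀ a, fstar a ∈ Set.Icc (0:ℝ) 1) :
    ∃ γ ∈ Set.Icc (0:ℝ) 1,
      klValue η π0 (gibbs η π0 fstar) fstar - klValue η π0 (gibbs η π0 f) fstar
        ≤ η * ∑ a, gibbs η π0 (fun a' => γ * f a' + (1 - γ) * fstar a') a
              * (f a - fstar a) ^ 2 := by
  classical
  set Δ : A → ℝ := fun a => f a - fstar a with hΔ
  set N : ℝ → ℝ := fun γ => ∑ a, π0 a * Real.exp (η * (fstar a + γ * Δ a)) with hNdef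
  set M : ℝ → ℝ := fun γ => ∑ a, π0 a * Δ a * Real.exp (η * (fstar a + γ * Δ a)) with hMdef
  set Q : ℝ → ℝ := fun γ => ∑ a, π0 a * Δ a ^ 2 * Real.exp (η * (fstar a + γ * Δ a)) with hQdef
  have hNpos : ∀ γ, 0 < N γ := fun γ =>
    Finset.sum_pos (fun a _ => mul_pos (hpos a) (Real.exp_pos _)) Finset.univ_nonempty
  have hQnn : ∀ γ, 0 ≤ Q γ := fun γ =>
    Finset.sum_nonneg fun a _ => mul_nonneg
      (mul_nonneg (hpos a).le (sq_nonneg _)) (Real.exp_pos _).le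
  -- derivative of each exponential term
  have hterm : ∀ (a : A) (γ : ℝ),
      HasDerivAt (fun γ => Real.exp (η * (fstar a + γ * Δ a)))
        (η * Δ a * Real.exp (η * (fstar a + γ * Δ a))) γ := by
    intro a γ
    have h1 : HasDerivAt (fun γ : ℝ => η * (fstar a + γ * Δ a)) (η * Δ a) γ := by
      have := ((hasDerivAt_id γ).mul_const (Δ a)).const_add (fstar a)
      simpa using this.const_mul η
    simpa [mul_comm] using h1.exp
  have hderivN : ∀ γ, HasDerivAt N (η * M γ) γ := by
    intro γ
    have := HasDerivAt.fun_sum (u := Finset.univ)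
      (fun a _ => ((hterm a γ).const_mul (π0 a)))
    refine this.congr_deriv ?_
    rw [hMdef, Finset.mul_sum]
    exact Finset.sum_congr rfl fun a _ => by ring
  have hderivM : ∀ γ, HasDerivAt M (η * Q γ) γ := by
    intro γ
    have := HasDerivAt.fun_sum (u := Finset.univ)
      (fun a _ => ((hterm a γ).const_mul (π0 a * Δ a)))
    refine this.congr_deriv ?_
    rw [hQdef, Finset.mul_sum]
    exact Finset.sum_congr rfl fun a _ => by ring
  -- φ and ψ and their derivatives
  set φ : ℝ → ℝ := fun γ => η⁻¹ * Real.log (N γ) with hφdef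
  set ψ : ℝ → ℝ := fun γ => M γ / N γ with hψdef
  have hderivφ : ∀ γ, HasDerivAt φ (ψ γ) γ := by
    intro γ
    have := ((hderivN γ).log (hNpos γ).ne').const_mul η⁻¹
    refine this.congr_deriv ?_
    rw [hψdef]
    field_simp
  have hderivψ : ∀ γ, HasDerivAt ψ
      ((η * Q γ * N γ - M γ * (η * M γ)) / (N γ) ^ 2) γ := fun γ =>
    (hderivM γ).div (hderivN γ) (hNpos γ).ne'
  -- value identities
  have hVstar : klValue η π0 (gibbs η π0 fstar) fstar = φ 0 := by
    rw [klValue_gibbs_eq π0 hpos η hη fstar fstar]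
    have h1 : ∑ a, gibbs η π0 fstar a * (fstar a - fstar a) = 0 := by simp
    have h2 : (∑ a, π0 a * Real.exp (η * fstar a)) = N 0 := by
      rw [hNdef]
      exact Finset.sum_congr rfl fun a _ => by norm_num
    rw [h1, h2]
    simp [hφdef]
  have hVf : klValue η π0 (gibbs η π0 f) fstar = φ 1 - ψ 1 := by
    rw [klValue_gibbs_eq π0 hpos η hη f fstar]
    have hN1 : (∑ a, π0 a * Real.exp (η * f a)) = N 1 := by
      rw [hNdef]
      refine Finset.sum_congr rfl fun a _ => by rw [hΔ]; ring_nf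
    have h1 : ∑ a, gibbs η π0 f a * (fstar a - f a) = -ψ 1 := by
      simp only [hψdef]
      unfold gibbs
      rw [hN1]
      have hterm1 : ∀ a : A, π0 a * Real.exp (η * f a) / N 1 * (fstar a - f a)
          = -(π0 a * Δ a * Real.exp (η * (fstar a + 1 * Δ a)) / N 1) := by
        intro a
        have harg : η * (fstar a + 1 * Δ a) = η * f a := by rw [hΔ]; ring
        rw [harg, hΔ]
        ring
      rw [Finset.sum_congr rfl fun a _ => hterm1 a, Finset.sum_neg_distrib,
        ← Finset.sum_div]
    rw [h1, hN1]
    simp only [hφdef]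
    ring
  -- first MVT
  have hcontφψ : ContinuousOn (fun γ => φ γ - ψ 1 * γ) (Set.Icc 0 1) := by
    intro x _
    exact (((hderivφ x).sub ((hasDerivAt_id x).const_mul (ψ 1))).continuousAt).continuousWithinAt
  obtain ⟨c, hc, hceq⟩ := exists_hasDerivAt_eq_slope (fun γ => φ γ - ψ 1 * γ)
    (fun γ => ψ γ - ψ 1) (by norm_num : (0:ℝ) < 1) hcontφψ
    (fun x _ => ((hderivφ x).sub ((hasDerivAt_id x).const_mul (ψ 1))).congr_deriv (by ring))
  -- gap = ψ 1 - ψ c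
  have hgap : klValue η π0 (gibbs η π0 fstar) fstar - klValue η π0 (gibbs η π0 f) fstar
      = ψ 1 - ψ c := by
    rw [hVstar, hVf]
    have : ψ c - ψ 1 = ((φ 1 - ψ 1 * 1) - (φ 0 - ψ 1 * 0)) / (1 - 0) := hceq
    have h2 : ψ c - ψ 1 = φ 1 - ψ 1 - φ 0 := by rw [this]; ring
    linarith
  -- second MVT on [c, 1]
  have hcontψ : ContinuousOn ψ (Set.Icc c 1) := fun x _ =>
    (hderivψ x).continuousAt.continuousWithinAt
  obtain ⟨d, hd, hdeq⟩ := exists_hasDerivAt_eq_slope ψ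
    (fun γ => (η * Q γ * N γ - M γ * (η * M γ)) / (N γ) ^ 2)
    hc.2 hcontψ (fun x _ => hderivψ x)
  refine ⟨d, ⟨le_of_lt (lt_trans hc.1 hd.1), hd.2.le⟩, ?_⟩
  rw [hgap]
  -- RHS equals η * Q d / N d
  have hRHS : (∑ a, gibbs η π0 (fun a' => d * f a' + (1 - d) * fstar a') a
      * (f a - fstar a) ^ 2) = Q d / N d := by
    have hNd : (∑ a', π0 a' * Real.exp (η * (d * f a' + (1 - d) * fstar a'))) = N d := by
      rw [hNdef]
      refine Finset.sum_congr rfl fun a _ => ?_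
      rw [hΔ]; ring_nf
    unfold gibbs
    rw [hNd]
    have hterm2 : ∀ a : A, π0 a * Real.exp (η * (d * f a + (1 - d) * fstar a)) / N d
        * (f a - fstar a) ^ 2
        = π0 a * Δ a ^ 2 * Real.exp (η * (fstar a + d * Δ a)) / N d := by
      intro a
      have harg : η * (d * f a + (1 - d) * fstar a) = η * (fstar a + d * Δ a) := by
        rw [hΔ]; ring
      rw [harg, hΔ]
      ring
    rw [Finset.sum_congr rfl fun a _ => hterm2 a, ← Finset.sum_div]
  rw [hRHS]
  have h1c : (1:ℝ) - c ≠ 0 := (sub_pos.mpr hc.2).ne'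
  have hgapd : ψ 1 - ψ c = (η * Q d * N d - M d * (η * M d)) / (N d) ^ 2 * (1 - c) := by
    rw [hdeq, div_mul_cancel₀ _ h1c]
  rw [hgapd]
  set E := (η * Q d * N d - M d * (η * M d)) / (N d) ^ 2 with hE
  have hRnn : 0 ≤ η * (Q d / N d) := mul_nonneg hη.le (div_nonneg (hQnn d) (hNpos d).le)
  rcases le_or_gt E 0 with hE0 | hE0
  · have : E * (1 - c) ≤ 0 := mul_nonpos_of_nonpos_of_nonneg hE0 (by linarith [hc.2])
    linarith
  · have h1 : E * (1 - c) ≤ E := by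
      nlinarith [hc.1, hc.2]
    have h2 : E ≤ η * (Q d / N d) := by
      have hNd := hNpos d
      have heq : E = η * (Q d / N d) - η * (M d / N d) ^ 2 := by
        rw [hE]; field_simp
      nlinarith [sq_nonneg (M d / N d), hη.le]
    linarith
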